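/- (Validity of Conformalized Quantile Regression, lower bound.) Let (Ω, P) be a probability space, E a measurable space, n ∈ ℕ, and let (X_1, Y_1), …, (X_{n+1}, Y_{n+1}) be E × ℝ-valued random variables that are exchangeable. Let l, u : E → ℝ be measurable functions, α ∈ (0,1), and k = ⌈(1−α)(n+1)⌉, and assume k ≤ n. Define the conformity scores S_i(ω) = max{Y_i(ω) − u(X_i(ω)), l(X_i(ω)) − Y_i(ω)} for i = 1, …, n, and let Q̂(ω) be the k-th order statistic of the multiset {S_1(ω), …, S_n(ω)}. Then P({ω : l(X_{n+1}(ω)) − Q̂(ω) ≤ Y_{n+1}(ω) ≤ u(X_{n+1}(ω)) + Q̂(ω)}) ≥ 1 − α. -/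

import Mathlib

open MeasureTheory Finset
open scoped ENNReal

private lemma drop_ge {L : List ℝ} (h : L.Pairwise (· ≤ ·)) {m : ℕ} (hm : m < L.length)
    {x : ℝ} (hx : x ∈ L.drop m) : L[m] ≤ x := by
  rw [List.mem_drop_iff_getElem] at hx
  obtain ⟨i, hi, rfl⟩ := hx
  have := List.Pairwise.rel_get_of_le h (a := ⟨m, hm⟩) (b := ⟨m + i, by omega⟩) (by simp)
  simpa using this

private lemma countP_lt_le {L : List ℝ} (h : L.Pairwise (· ≤ ·)) {m : ℕ} (hm : m < L.length)
    {t : ℝ} (ht : t ≤ L[m]) : L.countP (fun x => decide (x < t)) ≤ m := by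
  have h0 : (L.drop m).countP (fun x => decide (x < t)) = 0 := by
    rw [List.countP_eq_zero]
    intro a ha
    have := drop_ge h hm ha
    simp only [decide_eq_true_eq]
    linarith
  calc L.countP (fun x => decide (x < t))
      = ((L.take m) ++ (L.drop m)).countP (fun x => decide (x < t)) := by
        rw [List.take_append_drop]
    _ = (L.take m).countP _ + (L.drop m).countP _ := List.countP_append
    _ ≤ m + 0 := by
        rw [h0]
        exact Nat.add_le_add_right (le_trans (List.countP_le_length) (by simp)) 0
    _ = m := by omega

private lemma lt_countP {L : List ℝ} (h : L.Pairwise (· ≤ ·)) {m : ℕ} (hm : m < L.length)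
    {t : ℝ} (ht : L[m] < t) : m + 1 ≤ L.countP (fun x => decide (x < t)) := by
  have hlen : (L.take (m+1)).length = m + 1 := by
    rw [List.length_take]; omega
  have hall : ∀ a ∈ L.take (m+1), a < t := by
    intro a ha
    rw [List.mem_take_iff_getElem] at ha
    obtain ⟨i, hi, rfl⟩ := ha
    have hi' : i < L.length := by omega
    have : L[i] ≤ L[m] := by
      have := List.Pairwise.rel_get_of_le h (a := ⟨i, hi'⟩) (b := ⟨m, hm⟩) (by simp; omega)
      simpa using this
    linarith
  have h1 : (L.take (m+1)).countP (fun x => decide (x < t)) = m + 1 := by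
    rw [List.countP_eq_length.mpr (by intro a ha; simpa using hall a ha), hlen]
  calc m + 1 = (L.take (m+1)).countP (fun x => decide (x < t)) := h1.symm
    _ ≤ (L.take (m+1)).countP _ + (L.drop (m+1)).countP _ := Nat.le_add_right _ _
    _ = ((L.take (m+1)) ++ (L.drop (m+1))).countP (fun x => decide (x < t)) :=
        (List.countP_append).symm
    _ = L.countP (fun x => decide (x < t)) := by rw [List.take_append_drop]

private lemma le_getElem_iff_countP {L : List ℝ} (h : L.Pairwise (· ≤ ·)) {m : ℕ}
    (hm : m < L.length) (t : ℝ) :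
    t ≤ L[m] ↔ L.countP (fun x => decide (x < t)) ≤ m := by
  constructor
  · exact fun ht => countP_lt_le h hm ht
  · intro hc
    by_contra hlt
    have := lt_countP h hm (not_le.mp hlt)
    omega

private lemma le_sortD_iff {n : ℕ} (g : Fin n → ℝ) {m : ℕ} (hm : m < n) (t : ℝ) :
    t ≤ ((Finset.univ.val.map g).sort (· ≤ ·)).getD m 0 ↔
      (Finset.univ.filter (fun i => g i < t)).card ≤ m := by
  set M := Finset.univ.val.map g with hM
  set L := M.sort (· ≤ ·) with hLdef
  have hlen : L.length = n := by simp [hLdef, hM, Multiset.length_sort]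
  have hsorted : L.Pairwise (· ≤ ·) := Multiset.pairwise_sort _ _
  have hm' : m < L.length := by omega
  rw [List.getD_eq_getElem L 0 hm', le_getElem_iff_countP hsorted hm' t]
  have hc : L.countP (fun x => decide (x < t))
      = (Finset.univ.filter (fun i => g i < t)).card := by
    have h1 : Multiset.countP (fun x => x < t) (L : Multiset ℝ)
        = L.countP (fun x => decide (x < t)) := Multiset.coe_countP _ _
    rw [← h1, hLdef, Multiset.sort_eq, hM, Multiset.countP_map, Finset.card_def,
      Finset.filter_val]
  rw [hc]

private lemma count_rank {n : ℕ} (f : Fin (n+1) → ℝ) {k : ℕ} (hk1 : 1 ≤ k) (hkn : k ≤ n + 1) :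
    k ≤ (Finset.univ.filter (fun j =>
        (Finset.univ.filter (fun i => f i < f j)).card ≤ k - 1)).card := by
  set σ := Tuple.sort f with hσ
  have hmono := Tuple.monotone_sort f
  have hmaps : ∀ t : Fin k, σ (Fin.castLE hkn t) ∈ Finset.univ.filter (fun j =>
      (Finset.univ.filter (fun i => f i < f j)).card ≤ k - 1) := by
    intro t
    simp only [Finset.mem_filter, Finset.mem_univ, true_and]
    have hsub : Finset.univ.filter (fun i => f i < f (σ (Fin.castLE hkn t)))
        ⊆ Finset.image σ (Finset.Iio (Fin.castLE hkn t)) := by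
      intro i hi
      simp only [Finset.mem_filter, Finset.mem_univ, true_and] at hi
      rw [Finset.mem_image]
      refine ⟨σ.symm i, ?_, by simp⟩
      rw [Finset.mem_Iio]
      by_contra hge
      push_neg at hge
      have h2 : f (σ (Fin.castLE hkn t)) ≤ f (σ (σ.symm i)) := hmono hge
      simp only [Equiv.apply_symm_apply] at h2
      linarith
    calc (Finset.univ.filter (fun i => f i < f (σ (Fin.castLE hkn t)))).card
        ≤ (Finset.image σ (Finset.Iio (Fin.castLE hkn t))).card := Finset.card_le_card hsub
      _ = (Finset.Iio (Fin.castLE hkn t)).card :=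
          Finset.card_image_of_injective _ σ.injective
      _ = (t : ℕ) := by simp
      _ ≤ k - 1 := by omega
  have hinj : Set.InjOn (fun t : Fin k => σ (Fin.castLE hkn t))
      (Finset.univ : Finset (Fin k)) := by
    intro a _ b _ hab
    exact Fin.castLE_injective hkn (σ.injective hab)
  calc k = (Finset.univ : Finset (Fin k)).card := by simp
    _ ≤ _ := Finset.card_le_card_of_injOn _ (fun t _ => hmaps t) hinj

/-- Validity of Conformalized Quantile Regression: lower bound. -/
theorem stmt_4 {Ω E : Type*} [MeasurableSpace Ω] [MeasurableSpace E]
    (P : Measure Ω) [IsProbabilityMeasure P] (n : ℕ)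
    (X : Fin (n + 1) → Ω → E) (Y : Fin (n + 1) → Ω → ℝ)
    (hmeas : ∀ i, Measurable (fun ω => (X i ω, Y i ω)))
    (hexch : ∀ σ : Equiv.Perm (Fin (n + 1)),
      Measure.map (fun ω => fun i => (X (σ i) ω, Y (σ i) ω)) P
        = Measure.map (fun ω => fun i => (X i ω, Y i ω)) P)
    (l u : E → ℝ) (hl : Measurable l) (hu : Measurable u)
    (α : ℝ) (hα : α ∈ Set.Ioo (0 : ℝ) 1)
    (k : ℕ) (hk : k = ⌈(1 - α) * (n + 1 : ℝ)⌉₊) (hkn : k ≤ n)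
    (S : Fin (n + 1) → Ω → ℝ) (hS : ∀ i ω, S i ω = max (Y i ω - u (X i ω)) (l (X i ω) - Y i ω))
    (Q : Ω → ℝ)
    (hQ : ∀ ω, Q ω =
      ((Finset.univ.val.map (fun i : Fin n => S i.castSucc ω)).sort (· ≤ ·)).getD (k - 1) 0) :
    P {ω | l (X (Fin.last n) ω) - Q ω ≤ Y (Fin.last n) ω ∧
           Y (Fin.last n) ω ≤ u (X (Fin.last n) ω) + Q ω}
      ≥ ENNReal.ofReal (1 - α) := by
  classical
  obtain ⟨hα0, hα1⟩ := hα
  have hk1 : 1 ≤ k := by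
    rw [hk]
    refine Nat.ceil_pos.mpr ?_
    have : (0:ℝ) < n + 1 := by positivity
    nlinarith
  set s : E × ℝ → ℝ := fun p => max (p.2 - u p.1) (l p.1 - p.2) with hs_def
  have hs_meas : Measurable s :=
    Measurable.max (measurable_snd.sub (hu.comp measurable_fst))
      ((hl.comp measurable_fst).sub measurable_snd)
  set F : Ω → (Fin (n+1) → E × ℝ) := fun ω i => (X i ω, Y i ω) with hF_def
  have hF : Measurable F := measurable_pi_lambda _ (fun i => hmeas i)
  have hSF : ∀ i ω, S i ω = s (F ω i) := fun i ω => by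
    simp only [hs_def, hF_def, hS i ω]
  set B : Fin (n+1) → Set (Fin (n+1) → E × ℝ) := fun j =>
    {v | (Finset.univ.filter (fun i => s (v i) < s (v j))).card ≤ k - 1} with hB_def
  have hBmeas : ∀ j, MeasurableSet (B j) := by
    intro j
    have hg : Measurable (fun v : Fin (n+1) → E × ℝ =>
        ∑ i : Fin (n+1), if s (v i) < s (v j) then (1:ℕ) else 0) := by
      apply Finset.measurable_sum
      intro i _
      exact Measurable.ite (measurableSet_lt (hs_meas.comp (measurable_pi_apply i))
        (hs_meas.comp (measurable_pi_apply j))) measurable_const measurable_const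
    have hBeq : B j = (fun v : Fin (n+1) → E × ℝ =>
        ∑ i : Fin (n+1), if s (v i) < s (v j) then (1:ℕ) else 0) ⁻¹' (Set.Iic (k-1)) := by
      ext v
      simp only [hB_def, Set.mem_setOf_eq, Set.mem_preimage, Set.mem_Iic,
        Finset.card_filter]
    rw [hBeq]
    exact hg measurableSet_Iic
  set A : Fin (n+1) → Set Ω := fun j => F ⁻¹' (B j) with hA_def
  have hAmeas : ∀ j, MeasurableSet (A j) := fun j => hF (hBmeas j)
  have hcount : ∀ ω,
      (Finset.univ.filter (fun i : Fin (n+1) => s (F ω i) < s (F ω (Fin.last n)))).card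
      = (Finset.univ.filter (fun i : Fin n => S i.castSucc ω < S (Fin.last n) ω)).card := by
    intro ω
    rw [Finset.card_filter, Finset.card_filter, Fin.sum_univ_castSucc]
    simp [hSF]
  have htarget : {ω | l (X (Fin.last n) ω) - Q ω ≤ Y (Fin.last n) ω ∧
           Y (Fin.last n) ω ≤ u (X (Fin.last n) ω) + Q ω} = A (Fin.last n) := by
    ext ω
    simp only [Set.mem_setOf_eq, hA_def, Set.mem_preimage, hB_def, Set.mem_setOf_eq]
    have hiff1 : (l (X (Fin.last n) ω) - Q ω ≤ Y (Fin.last n) ω ∧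
        Y (Fin.last n) ω ≤ u (X (Fin.last n) ω) + Q ω) ↔ S (Fin.last n) ω ≤ Q ω := by
      rw [hS, max_le_iff]
      constructor <;> rintro ⟨h1, h2⟩ <;> constructor <;> linarith
    rw [hiff1, hQ ω,
      le_sortD_iff (fun i : Fin n => S i.castSucc ω) (by omega) (S (Fin.last n) ω),
      ← hcount ω]
  have hμ : ∀ j, P (A j) = P (A (Fin.last n)) := by
    intro j
    set σ := Equiv.swap j (Fin.last n) with hσ_def
    have hT : Measurable (fun v : Fin (n+1) → E × ℝ => fun i => v (σ i)) :=
      measurable_pi_lambda _ (fun i => measurable_pi_apply (σ i))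
    have hcomp : (fun ω => fun i => (X (σ i) ω, Y (σ i) ω))
        = (fun v : Fin (n+1) → E × ℝ => fun i => v (σ i)) ∘ F := rfl
    have h1 : Measure.map (fun v : Fin (n+1) → E × ℝ => fun i => v (σ i)) (Measure.map F P)
        = Measure.map F P := by
      rw [Measure.map_map hT hF, ← hcomp]; exact hexch σ
    have hpre : (fun v : Fin (n+1) → E × ℝ => fun i => v (σ i)) ⁻¹' (B (Fin.last n)) = B j := by
      ext v
      simp only [hB_def, Set.mem_preimage, Set.mem_setOf_eq]
      have hcard : (Finset.univ.filter
          (fun i => s (v (σ i)) < s (v (σ (Fin.last n))))).card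
          = (Finset.univ.filter (fun i => s (v i) < s (v j))).card := by
        have hσlast : σ (Fin.last n) = j := Equiv.swap_apply_right _ _
        rw [hσlast, Finset.card_filter, Finset.card_filter]
        exact Equiv.sum_comp σ (fun i => if s (v i) < s (v j) then 1 else 0)
      rw [hcard]
    calc P (A j) = Measure.map F P (B j) := (Measure.map_apply hF (hBmeas j)).symm
      _ = Measure.map F P ((fun v : Fin (n+1) → E × ℝ => fun i => v (σ i)) ⁻¹'
            B (Fin.last n)) := by rw [hpre]
      _ = Measure.map (fun v : Fin (n+1) → E × ℝ => fun i => v (σ i)) (Measure.map F P)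
            (B (Fin.last n)) := (Measure.map_apply hT (hBmeas _)).symm
      _ = Measure.map F P (B (Fin.last n)) := by rw [h1]
      _ = P (A (Fin.last n)) := Measure.map_apply hF (hBmeas _)
  have hpt : ∀ ω, (k : ℝ≥0∞) ≤ ∑ j : Fin (n+1), (A j).indicator (1 : Ω → ℝ≥0∞) ω := by
    intro ω
    have hcr := count_rank (fun j => s (F ω j)) hk1 (by omega)
    have hsumind : ∑ j : Fin (n+1), (A j).indicator (1 : Ω → ℝ≥0∞) ω
        = ((Finset.univ.filter (fun j => ω ∈ A j)).card : ℝ≥0∞) := by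
      rw [Finset.card_filter]
      push_cast
      refine Finset.sum_congr rfl (fun j _ => ?_)
      by_cases h : ω ∈ A j <;> simp [h, Set.indicator]
    rw [hsumind]
    have hsame : Finset.univ.filter (fun j : Fin (n+1) =>
        (Finset.univ.filter (fun i => s (F ω i) < s (F ω j))).card ≤ k - 1)
        = Finset.univ.filter (fun j => ω ∈ A j) := by
      refine Finset.filter_congr (fun j _ => ?_)
      simp [hA_def, hB_def]
    calc (k : ℝ≥0∞) ≤ ((Finset.univ.filter (fun j : Fin (n+1) =>
          (Finset.univ.filter (fun i => s (F ω i) < s (F ω j))).card ≤ k - 1)).card : ℝ≥0∞) :=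
          Nat.cast_le.mpr hcr
      _ = _ := by rw [hsame]
  have hsum : (k : ℝ≥0∞) ≤ ∑ j : Fin (n+1), P (A j) := by
    calc (k : ℝ≥0∞) = ∫⁻ _, (k : ℝ≥0∞) ∂P := by simp
      _ ≤ ∫⁻ ω, ∑ j : Fin (n+1), (A j).indicator (1 : Ω → ℝ≥0∞) ω ∂P :=
          lintegral_mono (fun ω => hpt ω)
      _ = ∑ j : Fin (n+1), ∫⁻ ω, (A j).indicator (1 : Ω → ℝ≥0∞) ω ∂P :=
          lintegral_finset_sum _ (fun j _ => measurable_one.indicator (hAmeas j))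
      _ = ∑ j : Fin (n+1), P (A j) :=
          Finset.sum_congr rfl (fun j _ => lintegral_indicator_one (hAmeas j))
  have hsum2 : ∑ j : Fin (n+1), P (A j) = ((n+1 : ℕ) : ℝ≥0∞) * P (A (Fin.last n)) := by
    rw [Finset.sum_congr rfl (fun j _ => hμ j)]
    simp [Finset.sum_const, Finset.card_univ, mul_comm]
  rw [htarget, ge_iff_le]
  have hne0 : ((n+1 : ℕ) : ℝ≥0∞) ≠ 0 := by simp
  have hnetop : ((n+1 : ℕ) : ℝ≥0∞) ≠ ⊤ := by simp
  rw [← ENNReal.mul_le_mul_iff_right hne0 hnetop]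
  have hkreal : (1 - α) * (n + 1 : ℝ) ≤ k := by rw [hk]; exact Nat.le_ceil _
  calc ((n+1 : ℕ) : ℝ≥0∞) * ENNReal.ofReal (1 - α)
      = ENNReal.ofReal ((n + 1 : ℝ) * (1 - α)) := by
        rw [ENNReal.ofReal_mul (by positivity)]
        congr 1
        rw [← ENNReal.ofReal_natCast (n+1)]
        norm_num
    _ ≤ (k : ℝ≥0∞) := by
        rw [← ENNReal.ofReal_natCast k]
        exact ENNReal.ofReal_le_ofReal (by nlinarith)
    _ ≤ ∑ j : Fin (n+1), P (A j) := hsum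
    _ = ((n+1 : ℕ) : ℝ≥0∞) * P (A (Fin.last n)) := hsum2
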